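/- Let π : V₁ → V₂ be a Finsler submersion between finite-dimensional singular norm spaces (V₁,F₁), (V₂,F₂). Then for every nonzero u ∈ V₂ there exists w ∈ V₁ with π(w) = u and F₁(w) = F₂(u) (a horizontal lift exists, though it need not be unique). -/
import Mathlib


/-- A singular norm: continuous, nonnegative, positive on nonzero vectors,
positively homogeneous of degree one, and convex. -/
def IsSingularNorm {V : Type*} [NormedAddCommGroup V] [NormedSpace ℝ V] (F : V → ℝ) : Prop :=
  Continuous F ∧ (∀ v, 0 ≤ F v) ∧ (∀ v, v ≠ 0 → 0 < F v) ∧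
    (∀ (c : ℝ), 0 ≤ c → ∀ v, F (c • v) = c * F v) ∧ ConvexOn ℝ Set.univ F

/-- For a Finsler submersion `π : (V₁,F₁) → (V₂,F₂)` between finite-dimensional singular norm
spaces, every nonzero `u ∈ V₂` admits a horizontal lift: some `w ∈ V₁` with `π w = u` and
`F₁ w = F₂ u`. -/
theorem stmt_15 {V₁ V₂ : Type*} [NormedAddCommGroup V₁] [NormedSpace ℝ V₁]
    [FiniteDimensional ℝ V₁] [NormedAddCommGroup V₂] [NormedSpace ℝ V₂]
    [FiniteDimensional ℝ V₂]
    (π : V₁ →ₗ[ℝ] V₂)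
    (F₁ : V₁ → ℝ) (F₂ : V₂ → ℝ) (hF₁ : IsSingularNorm F₁) (hF₂ : IsSingularNorm F₂)
    (hsub : π '' {w : V₁ | F₁ w ≤ 1} = {u : V₂ | F₂ u ≤ 1}) :
    ∀ u : V₂, u ≠ 0 → ∃ w : V₁, π w = u ∧ F₁ w = F₂ u := by
  obtain ⟨-, h1nn, h1pos, h1hom, -⟩ := hF₁
  obtain ⟨-, h2nn, h2pos, h2hom, -⟩ := hF₂
  intro u hu
  set c := F₂ u with hc
  have hcpos : 0 < c := h2pos u hu
  set u' : V₂ := c⁻¹ • u with hu'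
  have hFu' : F₂ u' = 1 := by
    rw [hu', h2hom c⁻¹ (by positivity) u, inv_mul_cancel₀ hcpos.ne']
  have hmem : u' ∈ {v : V₂ | F₂ v ≤ 1} := by simp [hFu']
  rw [← hsub] at hmem
  obtain ⟨w', hw'1, hw'2⟩ := hmem
  have hu'ne : u' ≠ 0 := smul_ne_zero (by positivity) hu
  have hw'ne : w' ≠ 0 := by
    rintro rfl; exact hu'ne (by simpa using hw'2.symm)
  set t := F₁ w' with ht
  have htpos : 0 < t := h1pos w' hw'ne
  have htle : t ≤ 1 := hw'1
  have htge : 1 ≤ t := by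
    by_contra h
    have hv : F₁ (t⁻¹ • w') = 1 := by
      rw [h1hom t⁻¹ (by positivity) w', inv_mul_cancel₀ htpos.ne']
    have hvmem : π (t⁻¹ • w') ∈ {v : V₂ | F₂ v ≤ 1} := by
      rw [← hsub]; exact ⟨t⁻¹ • w', le_of_eq hv, rfl⟩
    have : F₂ (t⁻¹ • u') ≤ 1 := by
      simpa [map_smul, hw'2] using hvmem
    rw [h2hom t⁻¹ (by positivity) u', hFu', mul_one] at this
    have : 1 ≤ t := by
      nlinarith [mul_inv_cancel₀ htpos.ne']
    exact h this
  have ht1 : t = 1 := le_antisymm htle htge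
  refine ⟨c • w', ?_, ?_⟩
  · rw [map_smul, hw'2, hu', smul_smul, mul_inv_cancel₀ hcpos.ne', one_smul]
  · rw [h1hom c hcpos.le w', ← ht, ht1, mul_one]
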